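/- Let G = (V, E, u, s, t) be a finite directed flow network with integral capacities u, a single source s and a single sink t, and let R ⊆ E. Let [V_R, V ∖ V_R] be a minimum s-t cut of G ∖ R (the network with the arcs of R removed). Then (i) ν^max(G ∖ R) = Σ_{e ∈ ω⁺(V_R) ∖ R} u(e) = ν([V_R, V ∖ V_R]) − Σ_{e ∈ R ∩ ω⁺(V_R)} u(e), where ν([V_R, V ∖ V_R]) is the value of the cut in G; and (ii) ν^max(G ∖ (R ∩ ω⁺(V_R))) = ν^max(G ∖ R). In particular, removing only the arcs of R that lie in the cut ω⁺(V_R) decreases the maximum flow by the same amount as removing all of R, so every minimal optimal interdiction set R satisfies R ⊆ ω⁺(V_R). -/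

import Mathlib

open scoped Classical

/-- Net outflow of the function `f` at the vertex `v` in the directed graph whose arcs
are the elements of `E`, with tails `esrc` and heads `edst`. -/
noncomputable def netOutflow {V E : Type*} [Fintype E] (esrc edst : E → V)
    (f : E → ℝ) (v : V) : ℝ :=
  (∑ e ∈ Finset.univ.filter (fun e => esrc e = v), f e) -
    ∑ e ∈ Finset.univ.filter (fun e => edst e = v), f e

/-- An `s`-`t` flow in the network `G ∖ R`, i.e. a flow vanishing on the removed arcs
`R`: capacities are respected, flow is conserved away from `s` and `t`, and the net
outflow at `s` is nonnegative. -/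
def IsFlowWithout {V E : Type*} [Fintype E] (esrc edst : E → V) (u : E → ℕ)
    (s t : V) (R : Set E) (f : E → ℝ) : Prop :=
  (∀ e, 0 ≤ f e ∧ f e ≤ (u e : ℝ)) ∧ (∀ e ∈ R, f e = 0) ∧
  (∀ v, v ≠ s → v ≠ t → netOutflow esrc edst f v = 0) ∧
  0 ≤ netOutflow esrc edst f s

/-- `ν^max(G ∖ R)`: the supremum of the values of `s`-`t` flows in `G ∖ R`. -/
noncomputable def maxFlowWithout {V E : Type*} [Fintype E] (esrc edst : E → V)
    (u : E → ℕ) (s t : V) (R : Set E) : ℝ :=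
  sSup {x : ℝ | ∃ f, IsFlowWithout esrc edst u s t R f ∧ x = netOutflow esrc edst f s}


open Finset

section Walks
variable {V : Type*} {A : Type*}

def IsWalk (src dst : A → V) : V → V → List A → Prop
  | x, y, [] => x = y
  | x, y, a :: L => src a = x ∧ IsWalk src dst (dst a) y L

lemma isWalk_tele (src dst : A → V) (φ : V → ℤ) :
    ∀ {L : List A} {x y : V}, IsWalk src dst x y L →
      (L.map fun a => φ (src a) - φ (dst a)).sum = φ x - φ y
  | [], x, y, h => by
      simp only [IsWalk] at h; simp [h]
  | a :: L, x, y, h => by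
      obtain ⟨h1, h2⟩ := h
      have ih := isWalk_tele src dst φ h2
      simp only [List.map_cons, List.sum_cons, ih, h1]; ring

lemma isWalk_append {src dst : A → V} :
    ∀ {L₁ L₂ : List A} {x y : V}, IsWalk src dst x y (L₁ ++ L₂) →
      ∃ w, IsWalk src dst w y L₂
  | [], L₂, x, y, h => ⟨x, h⟩
  | a :: L₁, L₂, x, y, h => isWalk_append (L₁ := L₁) h.2

lemma exists_walk (src dst : A → V) (P : A → Prop) (s t : V)
    (h : Relation.ReflTransGen (fun x y => ∃ a, P a ∧ src a = x ∧ dst a = y) s t) :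
    ∃ L : List A, IsWalk src dst s t L ∧ (∀ a ∈ L, P a) ∧ (L.map src).Nodup := by
  suffices h' : ∃ L : List A, IsWalk src dst s t L ∧ (∀ a ∈ L, P a) ∧
      (L.map src).Nodup ∧ t ∉ L.map src by
    obtain ⟨L, h1, h2, h3, _⟩ := h'; exact ⟨L, h1, h2, h3⟩
  induction h using Relation.ReflTransGen.head_induction_on with
  | refl => exact ⟨[], rfl, by simp, by simp, by simp⟩
  | head hxz hzt ih =>
    rename_i x z
    obtain ⟨L, hw, hP, hnd, htL⟩ := ih
    by_cases hx : x = t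
    · exact ⟨[], hx, by simp, by simp, by simp⟩
    by_cases hxL : x ∈ L.map src
    · obtain ⟨a, haL, ha⟩ := List.mem_map.1 hxL
      obtain ⟨L₁, L₂, rfl⟩ := List.append_of_mem haL
      obtain ⟨w, hw2⟩ := isWalk_append hw
      have hwx : w = x := by
        have := hw2.1; rw [ha] at this; exact this.symm ▸ rfl
      refine ⟨a :: L₂, hwx ▸ hw2, fun b hb => hP b (by simp at hb ⊢; tauto), ?_, ?_⟩
      · have hsub : ((a :: L₂).map src).Sublist ((L₁ ++ a :: L₂).map src) := by
          simp only [List.map_append]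
          exact (List.sublist_append_right _ _)
        exact hnd.sublist hsub
      · intro hc
        exact htL (by simp only [List.map_append, List.mem_append]; right; exact hc)
    · obtain ⟨a, haP, has, had⟩ := hxz
      refine ⟨a :: L, ⟨has, had ▸ hw⟩, ?_, ?_, ?_⟩
      · intro b hb; rcases List.mem_cons.1 hb with rfl | hb
        · exact haP
        · exact hP b hb
      · simp only [List.map_cons, List.nodup_cons]
        exact ⟨has ▸ hxL, hnd⟩
      · simp only [List.map_cons, List.mem_cons]
        rintro (rfl | hc)
        · exact hx (has ▸ rfl)
        · exact htL hc
end Walks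

section Flow
variable {V : Type*} [Fintype V] {A : Type*} [Fintype A]

/-- Integer net outflow. -/
noncomputable def no (src dst : A → V) (f : A → ℕ) (v : V) : ℤ :=
  ∑ a, (f a : ℤ) * ((if src a = v then 1 else 0) - (if dst a = v then 1 else 0))

noncomputable def cutVal (src dst : A → V) (cap : A → ℕ) (W : Set V) : ℕ :=
  ∑ a ∈ Finset.univ.filter (fun a => src a ∈ W ∧ dst a ∉ W), cap a

lemma sum_indicator_list (L : List A) (hL : L.Nodup) (g : A → ℤ) :
    (∑ a, if a ∈ L then g a else 0) = (L.map g).sum := by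
  simp only [← List.mem_toFinset]
  rw [Finset.sum_ite_mem]
  have h2 : Finset.univ ∩ L.toFinset = L.toFinset := by ext a; simp
  rw [h2, List.sum_toFinset _ hL]

variable {src dst : A → V}

lemma no_add (f g : A → ℕ) (v : V) :
    no src dst (fun a => f a + g a) v = no src dst f v + no src dst g v := by
  unfold no
  rw [← Finset.sum_add_distrib]
  refine Finset.sum_congr rfl fun a _ => by push_cast; ring

lemma no_sub (f g : A → ℕ) (hle : ∀ a, g a ≤ f a) (v : V) :
    no src dst (fun a => f a - g a) v = no src dst f v - no src dst g v := by
  unfold no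
  rw [← Finset.sum_sub_distrib]
  refine Finset.sum_congr rfl fun a _ => ?_
  have : ((f a - g a : ℕ) : ℤ) = (f a : ℤ) - g a := by
    have := hle a; omega
  rw [this]; ring

lemma sum_rev (rev : A → A) (hinv : Function.Involutive rev) (g : A → ℤ) :
    ∑ a, g (rev a) = ∑ a, g a :=
  Fintype.sum_bijective rev hinv.bijective _ _ (fun _ => rfl)

lemma no_symm_eq_zero (rev : A → A) (hinv : Function.Involutive rev)
    (hrs : ∀ a, src (rev a) = dst a) (hrd : ∀ a, dst (rev a) = src a)
    (h : A → ℕ) (hsymm : ∀ a, h (rev a) = h a) (v : V) :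
    no src dst h v = 0 := by
  set g : A → ℤ := fun a => (h a : ℤ) *
      ((if src a = v then 1 else 0) - (if dst a = v then 1 else 0)) with hg
  have h2 : ∀ a, g (rev a) = - g a := by
    intro a; simp only [hg]; rw [hsymm a, hrs a, hrd a]; ring
  have h3 : ∑ a, g a = - ∑ a, g a := by
    conv_lhs => rw [← sum_rev rev hinv g]
    rw [← Finset.sum_neg_distrib]
    exact Finset.sum_congr rfl fun a _ => h2 a
  have h4 : no src dst h v = ∑ a, g a := rfl
  omega

lemma no_indicator (L : List A) (hL : L.Nodup) {x y : V}
    (hw : IsWalk src dst x y L) (v : V) :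
    no src dst (fun a => if a ∈ L then 1 else 0) v =
      (if x = v then 1 else 0) - (if y = v then 1 else 0) := by
  have h1 : no src dst (fun a => if a ∈ L then 1 else 0) v =
      ∑ a, if a ∈ L then ((if src a = v then (1:ℤ) else 0) -
        (if dst a = v then 1 else 0)) else 0 := by
    unfold no
    refine Finset.sum_congr rfl fun a _ => ?_
    by_cases h : a ∈ L <;> simp [h]
  rw [h1, sum_indicator_list L hL]
  exact isWalk_tele src dst (fun w => if w = v then 1 else 0) hw

lemma exists_max_flow (src dst : A → V) (rev : A → A)
    (hinv : Function.Involutive rev) (hrs : ∀ a, src (rev a) = dst a)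
    (hrd : ∀ a, dst (rev a) = src a) (s t : V) (hst : s ≠ t) :
    ∀ (C : ℕ) (cap : A → ℕ),
      (∀ W : Set V, s ∈ W → t ∉ W → C ≤ cutVal src dst cap W) →
      (∃ W : Set V, s ∈ W ∧ t ∉ W ∧ cutVal src dst cap W = C) →
      ∃ f : A → ℕ, (∀ a, f a ≤ cap a) ∧
        (∀ v, v ≠ s → v ≠ t → no src dst f v = 0) ∧ no src dst f s = C := by
  intro C
  induction C with
  | zero =>
    intro cap _ _
    refine ⟨fun _ => 0, fun a => Nat.zero_le _, fun v _ _ => ?_, ?_⟩ <;>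
      · unfold no; simp
  | succ C ih =>
    intro cap hlb ⟨W₁, hsW₁, htW₁, hW₁⟩
    -- Step 1: find an augmenting path
    have hreach : Relation.ReflTransGen
        (fun x y => ∃ a, 0 < cap a ∧ src a = x ∧ dst a = y) s t := by
      by_contra hc
      set W₀ : Set V := {v | Relation.ReflTransGen
        (fun x y => ∃ a, 0 < cap a ∧ src a = x ∧ dst a = y) s v} with hW₀
      have h0 : cutVal src dst cap W₀ = 0 := by
        refine Finset.sum_eq_zero fun a ha => ?_
        rw [Finset.mem_filter] at ha
        obtain ⟨-, hsa, hda⟩ := ha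
        by_contra hcap
        exact hda (Relation.ReflTransGen.tail hsa
          ⟨a, Nat.pos_of_ne_zero hcap, rfl, rfl⟩)
      have := hlb W₀ Relation.ReflTransGen.refl hc
      omega
    obtain ⟨L, hw, hpos, hndsrc⟩ := exists_walk src dst (fun a => 0 < cap a) s t hreach
    have hnd : L.Nodup := hndsrc.of_map
    -- Step 2: the residual capacities
    set cap' : A → ℕ := fun a =>
      cap a - (if a ∈ L then 1 else 0) + (if rev a ∈ L then 1 else 0) with hcap'def
    have hcap' : ∀ a, (cap' a : ℤ) =
        (cap a : ℤ) - (if a ∈ L then 1 else 0) + (if rev a ∈ L then 1 else 0) := by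
      intro a
      by_cases h1 : a ∈ L
      · have hc : 0 < cap a := hpos a h1
        by_cases h2 : rev a ∈ L <;>
          simp only [hcap'def, h1, h2, if_true, if_false] <;> push_cast <;> omega
      · by_cases h2 : rev a ∈ L <;>
          simp only [hcap'def, h1, h2, if_true, if_false] <;> push_cast <;> omega
    -- Step 3: every cut loses exactly one unit
    have hcut : ∀ W : Set V, s ∈ W → t ∉ W →
        (cutVal src dst cap' W : ℤ) = (cutVal src dst cap W : ℤ) - 1 := by
      intro W hsW htW
      set φ : V → ℤ := fun w => -(if w ∈ W then (1:ℤ) else 0) with hφ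
      have htele := isWalk_tele src dst φ hw
      set cr : A → Prop := fun a => src a ∈ W ∧ dst a ∉ W with hcr
      have key : (cutVal src dst cap' W : ℤ) - (cutVal src dst cap W : ℤ) =
          ∑ a, if a ∈ L then (φ (src a) - φ (dst a)) else 0 := by
        unfold cutVal
        push_cast
        rw [← Finset.sum_sub_distrib]
        have e1 : ∀ a, (cap' a : ℤ) - (cap a : ℤ) =
            (if rev a ∈ L then (1:ℤ) else 0) - (if a ∈ L then 1 else 0) := by
          intro a; rw [hcap' a]; ring
        rw [Finset.sum_congr rfl fun a _ => e1 a]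
        rw [Finset.sum_filter]
        have esplit : ∀ a : A, (if cr a then ((if rev a ∈ L then (1:ℤ) else 0) -
            (if a ∈ L then 1 else 0)) else 0) =
            (if cr a then (if rev a ∈ L then (1:ℤ) else 0) else 0) -
            (if cr a then (if a ∈ L then (1:ℤ) else 0) else 0) := by
          intro a; split_ifs <;> ring
        rw [Finset.sum_congr rfl fun a _ => esplit a]
        rw [Finset.sum_sub_distrib]
        have e2 : (∑ a, if cr a then (if rev a ∈ L then (1:ℤ) else 0) else 0) =
            ∑ a, if a ∈ L then (if cr (rev a) then (1:ℤ) else 0) else 0 := by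
          rw [← sum_rev rev hinv (fun a => if cr a then (if rev a ∈ L then (1:ℤ) else 0) else 0)]
          refine Finset.sum_congr rfl fun a _ => ?_
          rw [hinv a]
          by_cases h1 : a ∈ L <;> by_cases h2 : cr (rev a) <;> simp [h1, h2]
        have e3 : (∑ a, if cr a then (if a ∈ L then (1:ℤ) else 0) else 0) =
            ∑ a, if a ∈ L then (if cr a then (1:ℤ) else 0) else 0 := by
          refine Finset.sum_congr rfl fun a _ => ?_
          by_cases h1 : a ∈ L <;> by_cases h2 : cr a <;> simp [h1, h2]
        rw [e2, e3, ← Finset.sum_sub_distrib]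
        refine Finset.sum_congr rfl fun a _ => ?_
        by_cases h1 : a ∈ L
        · simp only [h1, if_true]
          have hsr : src (rev a) = dst a := hrs a
          have hdr : dst (rev a) = src a := hrd a
          simp only [hcr, hsr, hdr, hφ]
          by_cases h2 : src a ∈ W <;> by_cases h3 : dst a ∈ W <;>
            simp [h2, h3]
        · simp [h1]
      rw [sum_indicator_list L hnd] at key
      rw [htele] at key
      have hφs : φ s = -1 := by simp [hφ, hsW]
      have hφt : φ t = 0 := by simp [hφ, htW]
      rw [hφs, hφt] at key
      omega
    -- Step 4: apply the induction hypothesis to cap'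
    have hlb' : ∀ W : Set V, s ∈ W → t ∉ W → C ≤ cutVal src dst cap' W := by
      intro W hsW htW
      have h1 := hcut W hsW htW
      have h2 := hlb W hsW htW
      omega
    have hex' : ∃ W : Set V, s ∈ W ∧ t ∉ W ∧ cutVal src dst cap' W = C := by
      refine ⟨W₁, hsW₁, htW₁, ?_⟩
      have h1 := hcut W₁ hsW₁ htW₁
      omega
    obtain ⟨f', hf'le, hf'cons, hf'val⟩ := ih cap' hlb' hex'
    -- Step 5: augment and cancel
    set f : A → ℕ := fun a => f' a + (if a ∈ L then 1 else 0) with hfdef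
    set h : A → ℕ := fun a => min (f a) (f (rev a)) with hhdef
    set g : A → ℕ := fun a => f a - h a with hgdef
    have hhle : ∀ a, h a ≤ f a := fun a => min_le_left _ _
    have hhsymm : ∀ a, h (rev a) = h a := by
      intro a; simp only [hhdef]; rw [hinv a]; exact min_comm _ _
    have hgle : ∀ a, g a ≤ cap a := by
      intro a
      have h1 := hf'le a
      have h2 := hf'le (rev a)
      have h3 : cap' a = cap a - (if a ∈ L then 1 else 0) + (if rev a ∈ L then 1 else 0) := rfl
      have h5 := hcap' a
      simp only [hgdef, hhdef, hfdef]
      by_cases hal : a ∈ L <;> by_cases hral : rev a ∈ L <;>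
        · have hc1 := fun hh => hpos a hh
        
          simp only [hal, hral, if_true, if_false] at h5 ⊢
          omega
    refine ⟨g, hgle, ?_, ?_⟩
    · intro v hvs hvt
      have e1 : no src dst g v = no src dst f v - no src dst h v :=
        no_sub f h hhle v
      have e2 : no src dst f v = no src dst f' v +
          no src dst (fun a => if a ∈ L then 1 else 0) v := no_add _ _ v
      have e3 := no_indicator L hnd hw v
      have e4 := no_symm_eq_zero rev hinv hrs hrd h hhsymm v
      have e5 := hf'cons v hvs hvt
      rw [e1, e2, e3, e4, e5]
      have : s ≠ v := fun hh => hvs hh.symm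
      have h2 : t ≠ v := fun hh => hvt hh.symm
      simp [this, h2]
    · have e1 : no src dst g s = no src dst f s - no src dst h s :=
        no_sub f h hhle s
      have e2 : no src dst f s = no src dst f' s +
          no src dst (fun a => if a ∈ L then 1 else 0) s := no_add _ _ s
      have e3 := no_indicator L hnd hw s
      have e4 := no_symm_eq_zero rev hinv hrs hrd h hhsymm s
      rw [e1, e2, e3, e4, hf'val]
      have h2 : t ≠ s := fun hh => hst hh.symm
      simp [h2]

end Flow

section Bridge
variable {V E : Type*} [Fintype V] [Fintype E] (esrc edst : E → V) (u : E → ℕ)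

lemma netOutflow_as_sum (F : E → ℝ) (v : V) :
    netOutflow esrc edst F v =
      ∑ e, F e * ((if esrc e = v then 1 else 0) - (if edst e = v then 1 else 0)) := by
  unfold netOutflow
  rw [Finset.sum_filter, Finset.sum_filter, ← Finset.sum_sub_distrib]
  refine Finset.sum_congr rfl fun e _ => ?_
  split_ifs <;> ring

lemma netOutflow_zero (v : V) : netOutflow esrc edst (fun _ => (0:ℝ)) v = 0 := by
  unfold netOutflow; simp

lemma zero_flow (s t : V) (RS : Set E) :
    IsFlowWithout esrc edst u s t RS (fun _ => 0) := by
  refine ⟨fun e => ⟨le_refl _, by positivity⟩, fun e _ => rfl, fun v _ _ => ?_, ?_⟩ <;>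
    simp [netOutflow_zero]

lemma flow_le_cut {s t : V} {RS : Set E} {F : E → ℝ}
    (hF : IsFlowWithout esrc edst u s t RS F) (W : Set V) (hs : s ∈ W) (ht : t ∉ W) :
    netOutflow esrc edst F s ≤
      ((∑ e ∈ Finset.univ.filter (fun e => e ∉ RS ∧ esrc e ∈ W ∧ edst e ∉ W), u e : ℕ) : ℝ) := by
  obtain ⟨hbd, hR0, hcons, -⟩ := hF
  have indW : ∀ x : V, (∑ v ∈ Finset.univ.filter (· ∈ W), (if x = v then (1:ℝ) else 0)) =
      if x ∈ W then 1 else 0 := by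
    intro x
    rw [Finset.sum_ite_eq]
    by_cases hx : x ∈ W <;> simp [hx]
  have key : netOutflow esrc edst F s =
      ∑ v ∈ Finset.univ.filter (· ∈ W), netOutflow esrc edst F v := by
    rw [Finset.sum_eq_single s]
    · intro v hv hvs
      rw [Finset.mem_filter] at hv
      exact hcons v hvs (fun h => ht (h ▸ hv.2))
    · intro hs'
      exact absurd (Finset.mem_filter.2 ⟨Finset.mem_univ s, hs⟩) hs'
  rw [key]
  have swap : ∑ v ∈ Finset.univ.filter (· ∈ W), netOutflow esrc edst F v =
      ∑ e, F e * ((if esrc e ∈ W then 1 else 0) - (if edst e ∈ W then 1 else 0)) := by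
    simp only [netOutflow_as_sum esrc edst F]
    rw [Finset.sum_comm]
    refine Finset.sum_congr rfl fun e _ => ?_
    rw [← Finset.mul_sum, Finset.sum_sub_distrib, indW, indW]
  rw [swap]
  have cast1 : ((∑ e ∈ Finset.univ.filter (fun e => e ∉ RS ∧ esrc e ∈ W ∧ edst e ∉ W), u e : ℕ) : ℝ)
      = ∑ e, if e ∉ RS ∧ esrc e ∈ W ∧ edst e ∉ W then (u e : ℝ) else 0 := by
    rw [← Finset.sum_filter]
    push_cast
    rfl
  rw [cast1]
  refine Finset.sum_le_sum fun e _ => ?_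
  obtain ⟨h0, h1⟩ := hbd e
  by_cases hW1 : esrc e ∈ W <;> by_cases hW2 : edst e ∈ W <;> by_cases hRe : e ∈ RS <;>
    simp only [hW1, hW2, hRe, if_true, if_false, not_true, not_false_iff, true_and,
      false_and, and_false, and_true] <;>
    first
      | (rw [if_neg (by tauto)]; nlinarith)
      | (rw [if_pos (by tauto)]; nlinarith)
      | nlinarith
      | (have := hR0 e hRe; nlinarith)
end Bridge


section Assemble
variable {V E : Type*} [Fintype V] [Fintype E] (esrc edst : E → V) (u : E → ℕ)

lemma cutVal_elim (RS : Set E) (W : Set V) :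
    cutVal (Sum.elim esrc edst) (Sum.elim edst esrc)
      (Sum.elim (fun e => if e ∈ RS then 0 else u e) (fun _ => 0)) W =
      ∑ e ∈ Finset.univ.filter (fun e => e ∉ RS ∧ esrc e ∈ W ∧ edst e ∉ W), u e := by
  unfold cutVal
  rw [Finset.sum_filter, Finset.sum_filter, Fintype.sum_sum_type]
  show ((∑ a₁ : E, if esrc a₁ ∈ W ∧ edst a₁ ∉ W then (if a₁ ∈ RS then 0 else u a₁) else 0) +
    ∑ a₂ : E, if edst a₂ ∈ W ∧ esrc a₂ ∉ W then (fun _ : E => (0:ℕ)) a₂ else 0) = _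
  have h2 : (∑ e : E, if edst e ∈ W ∧ esrc e ∉ W then
      (fun _ : E => (0:ℕ)) e else 0) = 0 := by
    refine Finset.sum_eq_zero fun e _ => ?_
    split_ifs <;> rfl
  rw [h2, add_zero]
  refine Finset.sum_congr rfl fun e _ => ?_
  split_ifs <;> tauto

lemma exists_opt_flow (s t : V) (hst : s ≠ t) (RS : Set E) (C : ℕ)
    (hlb : ∀ W : Set V, s ∈ W → t ∉ W →
      C ≤ ∑ e ∈ Finset.univ.filter (fun e => e ∉ RS ∧ esrc e ∈ W ∧ edst e ∉ W), u e)
    (hex : ∃ W : Set V, s ∈ W ∧ t ∉ W ∧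
      (∑ e ∈ Finset.univ.filter (fun e => e ∉ RS ∧ esrc e ∈ W ∧ edst e ∉ W), u e) = C) :
    ∃ F : E → ℝ, IsFlowWithout esrc edst u s t RS F ∧ netOutflow esrc edst F s = C := by
  set src : E ⊕ E → V := Sum.elim esrc edst with hsrc
  set dst : E ⊕ E → V := Sum.elim edst esrc with hdst
  set rev : E ⊕ E → E ⊕ E := Sum.elim Sum.inr Sum.inl with hrev
  set cap : E ⊕ E → ℕ := Sum.elim (fun e => if e ∈ RS then 0 else u e) (fun _ => 0) with hcap
  have hinv : Function.Involutive rev := by intro a; cases a <;> rfl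
  have hrs : ∀ a, src (rev a) = dst a := by intro a; cases a <;> rfl
  have hrd : ∀ a, dst (rev a) = src a := by intro a; cases a <;> rfl
  obtain ⟨f, hfle, hfcons, hfval⟩ := exists_max_flow src dst rev hinv hrs hrd s t hst C cap
    (fun W hsW htW => by rw [cutVal_elim]; exact hlb W hsW htW)
    (by obtain ⟨W, h1, h2, h3⟩ := hex; exact ⟨W, h1, h2, by rw [cutVal_elim]; exact h3⟩)
  have hinr : ∀ e : E, f (Sum.inr e) = 0 := by
    intro e
    have := hfle (Sum.inr e)
    simpa [hcap] using this
  set F : E → ℝ := fun e => (f (Sum.inl e) : ℝ) with hF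
  have hno : ∀ v, netOutflow esrc edst F v = (no src dst f v : ℝ) := by
    intro v
    rw [netOutflow_as_sum]
    have hcast : (no src dst f v : ℝ) = ∑ a : E ⊕ E, (f a : ℝ) *
        ((if src a = v then 1 else 0) - (if dst a = v then 1 else 0)) := by
      unfold no; push_cast; rfl
    rw [hcast, Fintype.sum_sum_type]
    simp only [hinr, Nat.cast_zero, zero_mul, Finset.sum_const_zero, add_zero]
    exact Finset.sum_congr rfl fun e _ => rfl
  refine ⟨F, ⟨?_, ?_, ?_, ?_⟩, ?_⟩
  · intro e
    refine ⟨by positivity, ?_⟩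
    have h3 : f (Sum.inl e) ≤ u e := by
      have := hfle (Sum.inl e)
      simp only [hcap, Sum.elim_inl] at this
      split_ifs at this <;> omega
    simp only [hF]
    exact_mod_cast h3
  · intro e he
    have := hfle (Sum.inl e)
    simp only [hcap, Sum.elim_inl, if_pos he, Nat.le_zero] at this
    simp [hF, this]
  · intro v hv1 hv2
    rw [hno, hfcons v hv1 hv2]; simp
  · rw [hno, hfval]; positivity
  · rw [hno, hfval]; simp

lemma maxFlow_eq (s t : V) (hst : s ≠ t) (RS : Set E) (C : ℕ)
    (hlb : ∀ W : Set V, s ∈ W → t ∉ W →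
      C ≤ ∑ e ∈ Finset.univ.filter (fun e => e ∉ RS ∧ esrc e ∈ W ∧ edst e ∉ W), u e)
    (hex : ∃ W : Set V, s ∈ W ∧ t ∉ W ∧
      (∑ e ∈ Finset.univ.filter (fun e => e ∉ RS ∧ esrc e ∈ W ∧ edst e ∉ W), u e) = C) :
    maxFlowWithout esrc edst u s t RS = C := by
  obtain ⟨F, hF, hFval⟩ := exists_opt_flow esrc edst u s t hst RS C hlb hex
  obtain ⟨W, hsW, htW, hWval⟩ := hex
  have hub : ∀ x ∈ {x : ℝ | ∃ f, IsFlowWithout esrc edst u s t RS f ∧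
      x = netOutflow esrc edst f s}, x ≤ (C : ℝ) := by
    rintro x ⟨G, hG, rfl⟩
    calc netOutflow esrc edst G s
        ≤ ((∑ e ∈ Finset.univ.filter (fun e => e ∉ RS ∧ esrc e ∈ W ∧ edst e ∉ W), u e : ℕ) : ℝ) :=
          flow_le_cut esrc edst u hG W hsW htW
      _ = (C : ℝ) := by rw [hWval]
  unfold maxFlowWithout
  apply le_antisymm
  · exact csSup_le ⟨netOutflow esrc edst F s, F, hF, rfl⟩ hub
  · exact le_csSup ⟨(C : ℝ), hub⟩ ⟨F, hF, hFval.symm⟩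

end Assemble

/-- Let `[V_R, V ∖ V_R]` be a minimum `s`-`t` cut of `G ∖ R`.  Then
(i) `ν^max(G ∖ R) = Σ_{e ∈ ω⁺(V_R) ∖ R} u(e) = ν([V_R, V ∖ V_R]) − Σ_{e ∈ R ∩ ω⁺(V_R)} u(e)`;
(ii) `ν^max(G ∖ (R ∩ ω⁺(V_R))) = ν^max(G ∖ R)`; and in particular every minimal optimal
interdiction set `R` satisfies `R ⊆ ω⁺(V_R)`. -/
theorem statement6 {V E : Type*} [Fintype V] [Fintype E] [DecidableEq E]
    (esrc edst : E → V) (u : E → ℕ) (s t : V) (hst : s ≠ t)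
    (R : Finset E) (VR : Set V) (hsVR : s ∈ VR) (htVR : t ∉ VR)
    (hmin : ∀ W : Set V, s ∈ W → t ∉ W →
      (∑ e ∈ Finset.univ.filter (fun e => e ∉ R ∧ esrc e ∈ VR ∧ edst e ∉ VR), u e) ≤
        ∑ e ∈ Finset.univ.filter (fun e => e ∉ R ∧ esrc e ∈ W ∧ edst e ∉ W), u e) :
    (maxFlowWithout esrc edst u s t ↑R =
        ((∑ e ∈ Finset.univ.filter (fun e => e ∉ R ∧ esrc e ∈ VR ∧ edst e ∉ VR), u e :
          ℕ) : ℝ)) ∧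
    (maxFlowWithout esrc edst u s t ↑R =
        ((∑ e ∈ Finset.univ.filter (fun e => esrc e ∈ VR ∧ edst e ∉ VR), u e : ℕ) : ℝ) -
          ((∑ e ∈ R.filter (fun e => esrc e ∈ VR ∧ edst e ∉ VR), u e : ℕ) : ℝ)) ∧
    (maxFlowWithout esrc edst u s t ↑(R.filter (fun e => esrc e ∈ VR ∧ edst e ∉ VR)) =
        maxFlowWithout esrc edst u s t ↑R) ∧
    (∀ (c : E → ℕ∞) (B : ℕ),
      (∑ e ∈ R, c e) ≤ (B : ℕ∞) →
      (∀ R' : Finset E, (∑ e ∈ R', c e) ≤ (B : ℕ∞) →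
        maxFlowWithout esrc edst u s t ↑R ≤ maxFlowWithout esrc edst u s t ↑R') →
      (∀ e ∈ R, ¬ ((∑ e' ∈ R.erase e, c e') ≤ (B : ℕ∞) ∧
        ∀ R' : Finset E, (∑ e' ∈ R', c e') ≤ (B : ℕ∞) →
          maxFlowWithout esrc edst u s t ↑(R.erase e) ≤
            maxFlowWithout esrc edst u s t ↑R')) →
      ∀ e ∈ R, esrc e ∈ VR ∧ edst e ∉ VR) := by
  classical
  set C : ℕ := ∑ e ∈ Finset.univ.filter (fun e => e ∉ R ∧ esrc e ∈ VR ∧ edst e ∉ VR), u e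
    with hC
  have hfilt : ∀ (S : Finset E) (W : Set V),
      Finset.univ.filter (fun e => e ∉ (↑S : Set E) ∧ esrc e ∈ W ∧ edst e ∉ W) =
      Finset.univ.filter (fun e => e ∉ S ∧ esrc e ∈ W ∧ edst e ∉ W) := by
    intro S W
    apply Finset.filter_congr
    intro e _
    simp [Finset.mem_coe]
  have part1 : maxFlowWithout esrc edst u s t ↑R = (C : ℝ) := by
    apply maxFlow_eq esrc edst u s t hst (↑R) C
    · intro W hsW htW
      simp only [Finset.mem_coe]
      exact hmin W hsW htW
    · exact ⟨VR, hsVR, htVR, by simp only [Finset.mem_coe]; exact hC.symm⟩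
  have hsplit : (∑ e ∈ Finset.univ.filter (fun e => esrc e ∈ VR ∧ edst e ∉ VR), u e) =
      (∑ e ∈ R.filter (fun e => esrc e ∈ VR ∧ edst e ∉ VR), u e) + C := by
    rw [← Finset.sum_filter_add_sum_filter_not
      (Finset.univ.filter (fun e => esrc e ∈ VR ∧ edst e ∉ VR)) (fun e => e ∈ R) u]
    congr 1
    · congr 1
      ext e'
      simp only [Finset.mem_filter, Finset.mem_univ, true_and]
      tauto
    · rw [hC]
      congr 1
      ext e'
      simp only [Finset.mem_filter, Finset.mem_univ, true_and]
      tauto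
  have part3 : maxFlowWithout esrc edst u s t
      ↑(R.filter (fun e => esrc e ∈ VR ∧ edst e ∉ VR)) = (C : ℝ) := by
    apply maxFlow_eq esrc edst u s t hst _ C
    · intro W hsW htW
      simp only [Finset.mem_coe]
      refine le_trans (hmin W hsW htW) (Finset.sum_le_sum_of_subset ?_)
      intro e' he'
      simp only [Finset.mem_filter, Finset.mem_univ, true_and] at he' ⊢
      tauto
    · refine ⟨VR, hsVR, htVR, ?_⟩
      simp only [Finset.mem_coe]; rw [hC]
      congr 1
      apply Finset.filter_congr
      intro e' _
      simp only [Finset.mem_filter]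
      tauto
  refine ⟨part1, ?_, ?_, ?_⟩
  · rw [part1, hsplit]
    push_cast
    ring
  · rw [part3, part1]
  · rintro c B hB h2 h3 e he
    by_contra hcr
    refine h3 e he ⟨?_, ?_⟩
    · exact le_trans (Finset.sum_le_sum_of_subset (Finset.erase_subset e R)) hB
    · intro R' hR'
      have h4 : maxFlowWithout esrc edst u s t ↑(R.erase e) = (C : ℝ) := by
        apply maxFlow_eq esrc edst u s t hst _ C
        · intro W hsW htW
          simp only [Finset.mem_coe]
          refine le_trans (hmin W hsW htW) (Finset.sum_le_sum_of_subset ?_)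
          intro e' he'
          simp only [Finset.mem_filter, Finset.mem_univ, true_and, Finset.mem_erase] at he' ⊢
          tauto
        · refine ⟨VR, hsVR, htVR, ?_⟩
          simp only [Finset.mem_coe]; rw [hC]
          congr 1
          apply Finset.filter_congr
          intro e' _
          simp only [Finset.mem_erase]
          constructor
          · rintro ⟨h1', hcr'⟩
            refine ⟨fun hmem => ?_, hcr'⟩
            by_cases heq : e' = e
            · exact hcr (heq ▸ hcr')
            · exact h1' ⟨heq, hmem⟩
          · rintro ⟨h1', hcr'⟩
            exact ⟨fun hh => h1' hh.2, hcr'⟩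
      rw [h4, ← part1]
      exact h2 R' hR'
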